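/- Let L, E, θ^n, H be as in the context, let f(x) = x^N − Σ_{k=1}^{N−1} e_k x^{N−k} − (1 + e_N), and let φ be its unique positive real root. If B is a real number with B ≠ φ such that H_k = B^{k−1} for 1 ≤ k ≤ N, then lim_{n→∞} H_n/φ^{n−1} = f(B)/((B − φ)·f′(φ)). -/

import Mathlib

open Filter Topology

namespace Zeck

-- A coefficient function is `μ : ℕ → ℕ`; index `0` is unused (members vanish there).

/-- The maximal L-block `θ^n` at index `n-1`, for `L = (e 1, …, e N)`. -/
def maxBlock (N : ℕ) (e : ℕ → ℕ) (n : ℕ) : ℕ → ℕ :=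
  fun k => if 1 ≤ k ∧ k < n then e ((n - k - 1) % N + 1) else 0

/-- A proper L-block at index `n-1` with support interval `[a, n-1]`. -/
def IsProperBlock (N : ℕ) (e : ℕ → ℕ) (ζ : ℕ → ℕ) (a n : ℕ) : Prop :=
  2 ≤ n ∧ 1 ≤ a ∧ a ≤ n - 1 ∧ (∀ j, a < j → ζ j = maxBlock N e n j) ∧
    ζ a < maxBlock N e n a ∧ (∀ j, j < a → ζ j = 0)

/-- An L-block (proper or maximal), together with its support interval. -/
def IsBlock (N : ℕ) (e : ℕ → ℕ) (ζ : ℕ → ℕ) (I : Finset ℕ) : Prop :=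
  ∃ n, 2 ≤ n ∧ ((ζ = maxBlock N e n ∧ I = Finset.Icc 1 (n - 1)) ∨
    (∃ a, IsProperBlock N e ζ a n ∧ I = Finset.Icc a (n - 1)))

/-- Membership in the periodic Zeckendorf collection for positive integers determined by L:
finite sums of L-blocks with pairwise disjoint support intervals (the zero function has `l = 0`). -/
def memColl (N : ℕ) (e : ℕ → ℕ) (μ : ℕ → ℕ) : Prop :=
  ∃ (l : ℕ) (ζ : ℕ → ℕ → ℕ) (I : ℕ → Finset ℕ),
    (∀ i, i < l → IsBlock N e (ζ i) (I i)) ∧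
    (∀ i j, i < l → j < l → i ≠ j → Disjoint (I i) (I j)) ∧
    ∀ k, μ k = ∑ i ∈ Finset.range l, ζ i k

/-- The maximal L*-block `β̄^n` at index `n`. -/
def maxStarBlock (N : ℕ) (e : ℕ → ℕ) (n : ℕ) : ℕ → ℕ :=
  fun k => if n ≤ k then e ((k - n) % N + 1) else 0

/-- A proper L*-block at index `n` with support interval `[n, b]`. -/
def IsProperStarBlock (N : ℕ) (e : ℕ → ℕ) (ζ : ℕ → ℕ) (n b : ℕ) : Prop :=
  1 ≤ n ∧ n ≤ b ∧ (∀ j, j < b → ζ j = maxStarBlock N e n j) ∧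
    ζ b < maxStarBlock N e n b ∧ (∀ j, b < j → ζ j = 0)

/-- Membership in the periodic Zeckendorf collection for `(0,1)` determined by L:
nonzero finite or infinite sums of proper L*-blocks with pairwise disjoint support intervals. -/
def memStar (N : ℕ) (e : ℕ → ℕ) (ε : ℕ → ℕ) : Prop :=
  ε ≠ 0 ∧ ∃ (l : ℕ∞) (ζ : ℕ → ℕ → ℕ) (nb : ℕ → ℕ × ℕ),
    (∀ i : ℕ, (i : ℕ∞) < l → IsProperStarBlock N e (ζ i) (nb i).1 (nb i).2) ∧
    (∀ i j : ℕ, (i : ℕ∞) < l → (j : ℕ∞) < l → i ≠ j →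
      Disjoint (Finset.Icc (nb i).1 (nb i).2) (Finset.Icc (nb j).1 (nb j).2)) ∧
    ∀ k, ε k = ∑' i : ℕ, if (i : ℕ∞) < l then ζ i k else 0

/-- A decomposition `ε = ζ^1 + … + ζ^l + μ` in which the `ζ^i` are proper L*-blocks whose
support intervals partition `[1, b]` and `μ` vanishes on `[0, b]` (`l, b` possibly infinite). -/
def DecompData (N : ℕ) (e : ℕ → ℕ) (ε : ℕ → ℕ) (l : ℕ∞) (ζ : ℕ → ℕ → ℕ)
    (nb : ℕ → ℕ × ℕ) (b : ℕ∞) (μ : ℕ → ℕ) : Prop :=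
  (∀ i : ℕ, (i : ℕ∞) < l → IsProperStarBlock N e (ζ i) (nb i).1 (nb i).2) ∧
  (∀ i j : ℕ, (i : ℕ∞) < l → (j : ℕ∞) < l → i ≠ j →
    Disjoint (Set.Icc (nb i).1 (nb i).2) (Set.Icc (nb j).1 (nb j).2)) ∧
  (⋃ i ∈ {i : ℕ | (i : ℕ∞) < l}, Set.Icc (nb i).1 (nb i).2) = {k : ℕ | 1 ≤ k ∧ (k : ℕ∞) ≤ b} ∧
  (∀ k : ℕ, (k : ℕ∞) ≤ b → μ k = 0) ∧
  (∀ k, ε k = (∑' i : ℕ, if (i : ℕ∞) < l then ζ i k else 0) + μ k)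

/-- Membership in `E̅*`. -/
def memEBar (N : ℕ) (e : ℕ → ℕ) (ε : ℕ → ℕ) : Prop :=
  memStar N e ε ∨
  ∃ (l : ℕ) (ζ : ℕ → ℕ → ℕ) (nb : ℕ → ℕ × ℕ) (b : ℕ),
    DecompData N e ε (l : ℕ∞) ζ nb (b : ℕ∞) (maxStarBlock N e (b + 1))

/-- Descending lexicographic order. -/
def dLT (a b : ℕ → ℕ) : Prop := ∃ k, a k < b k ∧ ∀ j, j < k → a j = b j

def dLE (a b : ℕ → ℕ) : Prop := a = b ∨ dLT a b

/-- Ascending lexicographic order (on finitely supported functions). -/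
def aLT (a b : ℕ → ℕ) : Prop := ∃ k, a k < b k ∧ ∀ j, k < j → a j = b j

/-- The basis coefficient function `β^b`. -/
def betaUnit (b : ℕ) : ℕ → ℕ := fun k => if k = b then 1 else 0

/-- The relation `η = rev̄(ε)`. -/
def RevBar (N : ℕ) (e : ℕ → ℕ) (ε η : ℕ → ℕ) : Prop :=
  (dLE (maxStarBlock N e 1) ε ∧ η = maxStarBlock N e 1) ∨
  (dLT ε (maxStarBlock N e 1) ∧
    ((memStar N e ε ∧ η = ε) ∨
     ∃ (l : ℕ) (ζ : ℕ → ℕ → ℕ) (nb : ℕ → ℕ × ℕ) (b : ℕ) (μ : ℕ → ℕ),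
       DecompData N e ε (l : ℕ∞) ζ nb (b : ℕ∞) μ ∧
       ((dLT (maxStarBlock N e (b + 1)) μ ∧
           η = fun k => (∑ i ∈ Finset.range l, ζ i k) + betaUnit b k) ∨
        (μ = maxStarBlock N e (b + 1) ∧ η = ε))))

/-- `Σ_k ε_k w^k` as a real number. -/
noncomputable def evalReal (ε : ℕ → ℕ) (w : ℝ) : ℝ := ∑' k : ℕ, (ε k : ℝ) * w ^ k

/-- `Σ_k ε_k H_k` (finitely supported `ε`). -/
noncomputable def evalNat (ε H : ℕ → ℕ) : ℕ := ∑' k : ℕ, ε k * H k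

/-- The counting function `z`. -/
noncomputable def zfun (N : ℕ) (e : ℕ → ℕ) (Ht : ℕ → ℕ) (x : ℕ) : ℕ :=
  Set.ncard {m : ℕ | m < x ∧ ∃ ε, memColl N e ε ∧ m = evalNat ε Ht}

/-- Characteristic polynomial of `L` for positive integers. -/
noncomputable def fchar (N : ℕ) (e : ℕ → ℕ) (x : ℝ) : ℝ :=
  x ^ N - (∑ k ∈ Finset.Ico 1 N, (e k : ℝ) * x ^ (N - k)) - (1 + (e N : ℝ))

/-- Characteristic polynomial of `L` for `(0,1)`. -/
noncomputable def gchar (N : ℕ) (e : ℕ → ℕ) (x : ℝ) : ℝ :=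
  -1 + (∑ k ∈ Finset.Ico 1 N, (e k : ℝ) * x ^ k) + (1 + (e N : ℝ)) * x ^ N

end Zeck

open Zeck Filter

section steps
variable (N : ℕ) (e : ℕ → ℕ) (H : ℕ → ℕ) (B : ℝ)

private lemma eqnR_lemma (hN : 2 ≤ N)
    (hHrec : ∀ n, 2 ≤ n → H n = 1 + ∑ k ∈ Finset.Ico 1 n, maxBlock N e n k * H k)
    (hHB : ∀ k, 1 ≤ k → k ≤ N → (H k : ℝ) = B ^ (k - 1)) :
    ∀ n, 1 ≤ n → n ≤ N →
      B ^ (n-1) = 1 + ∑ i ∈ Finset.range (n-1), (e (n-1-i) : ℝ) * B ^ i := by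
  intro n h1 h2
  rcases Nat.lt_or_ge n 2 with h | h
  · have hn1 : n = 1 := by omega
    subst hn1; simp
  · rw [← hHB n (by omega) h2, hHrec n h]
    push_cast
    congr 1
    rw [Finset.sum_Ico_eq_sum_range]
    refine Finset.sum_congr (by congr 1) fun i hi => ?_
    simp only [Finset.mem_range] at hi
    have hi' : i < n - 1 := by omega
    rw [Zeck.maxBlock, if_pos (by omega : 1 ≤ 1 + i ∧ 1 + i < n)]
    have hmod : (n - (1 + i) - 1) % N = n - (1 + i) - 1 := Nat.mod_eq_of_lt (by omega)
    rw [hmod]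
    rw [hHB (1+i) (by omega) (by omega)]
    have h1' : n - (1 + i) - 1 + 1 = n - 1 - i := by omega
    have h2' : 1 + i - 1 = i := by omega
    rw [h1', h2']

end steps

section steps2
variable (N : ℕ) (e : ℕ → ℕ) (B : ℝ)

private lemma hek_lemma (hN : 2 ≤ N)
    (eqnR : ∀ n, 1 ≤ n → n ≤ N →
      B ^ (n-1) = 1 + ∑ i ∈ Finset.range (n-1), (e (n-1-i) : ℝ) * B ^ i) :
    ((B : ℝ) = 1 + (e 1 : ℝ)) ∧ ∀ t, 1 ≤ t → t < N → e t = e 1 := by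
  have hcB : (B : ℝ) = 1 + (e 1 : ℝ) := by
    have h := eqnR 2 (by omega) hN
    simpa using h
  refine ⟨hcB, ?_⟩
  intro t h1 h2
  obtain ⟨s, rfl⟩ : ∃ s, t = s + 1 := ⟨t - 1, by omega⟩
  have ha := eqnR (s+1) (by omega) (by omega)
  have hb := eqnR (s+2) (by omega) (by omega)
  simp only [Nat.add_sub_cancel] at ha
  have hb' : B ^ (s+1) = 1 + ∑ i ∈ Finset.range (s+1), (e (s+1-i) : ℝ) * B ^ i := by
    have : s + 2 - 1 = s + 1 := by omega
    rw [this] at hb; exact hb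
  rw [Finset.sum_range_succ'] at hb'
  -- hb' : B^(s+1) = 1 + (∑ i ∈ range s, e (s+1-(i+1)) * B^(i+1) + e (s+1-0) * B^0)
  have hmul : B ^ (s+1) = B + ∑ i ∈ Finset.range s, (e (s-i) : ℝ) * B ^ (i+1) := by
    rw [pow_succ, ha]
    rw [add_mul, one_mul, Finset.sum_mul]
    congr 1
    refine Finset.sum_congr rfl fun i hi => ?_
    rw [mul_assoc, ← pow_succ]
  have hsums : ∑ i ∈ Finset.range s, (e (s+1-(i+1)) : ℝ) * B ^ (i+1)
      = ∑ i ∈ Finset.range s, (e (s-i) : ℝ) * B ^ (i+1) := by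
    refine Finset.sum_congr rfl fun i hi => ?_
    have hix : s + 1 - (i+1) = s - i := by omega
    rw [hix]
  rw [hsums] at hb'
  have : (e (s+1) : ℝ) = (e 1 : ℝ) := by
    have hx : (e (s+1-0) : ℝ) * B ^ 0 = (e (s+1) : ℝ) := by simp
    rw [hx] at hb'
    have hcomb := hb'.symm.trans hmul
    linarith [hcB]
  exact_mod_cast this

end steps2

section steps3
variable (N : ℕ) (e : ℕ → ℕ) (H : ℕ → ℕ)

private lemma hrecN_lemma (hN : 2 ≤ N) (hH1 : H 1 = 1)
    (hHrec : ∀ n, 2 ≤ n → H n = 1 + ∑ k ∈ Finset.Ico 1 n, maxBlock N e n k * H k) :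
    ∀ n, N + 1 ≤ n → H n = H (n - N) + ∑ j ∈ Finset.Icc 1 N, e j * H (n - j) := by
  intro n hn
  rw [hHrec n (by omega)]
  rw [← Finset.sum_Ico_consecutive (fun k => maxBlock N e n k * H k)
    (by omega : 1 ≤ n - N) (by omega : n - N ≤ n)]
  have part1 : 1 + ∑ k ∈ Finset.Ico 1 (n - N), maxBlock N e n k * H k = H (n - N) := by
    rcases Nat.lt_or_ge (n - N) 2 with h | h
    · have h1 : n - N = 1 := by omega
      rw [h1]; simp [hH1]
    · rw [hHrec (n - N) h]
      congr 1
      refine Finset.sum_congr rfl fun k hk => ?_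
      simp only [Finset.mem_Ico] at hk
      rw [Zeck.maxBlock, Zeck.maxBlock, if_pos (by omega : 1 ≤ k ∧ k < n),
        if_pos (by omega : 1 ≤ k ∧ k < n - N)]
      have hmod : n - k - 1 = (n - N - k - 1) + N := by omega
      rw [hmod, Nat.add_mod_right]
  have part2 : ∑ k ∈ Finset.Ico (n - N) n, maxBlock N e n k * H k
      = ∑ j ∈ Finset.Icc 1 N, e j * H (n - j) := by
    rw [← Finset.Ico_add_one_right_eq_Icc, Finset.sum_Ico_eq_sum_range, Finset.sum_Ico_eq_sum_range]
    have hc1 : n - (n - N) = N := by omega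
    have hc2 : N + 1 - 1 = N := by omega
    rw [hc1, hc2]
    rw [← Finset.sum_range_reflect (fun i => e (1 + i) * H (n - (1 + i))) N]
    refine Finset.sum_congr rfl fun i hi => ?_
    simp only [Finset.mem_range] at hi
    rw [Zeck.maxBlock, if_pos (by omega : 1 ≤ n - N + i ∧ n - N + i < n)]
    have hmod : (n - (n - N + i) - 1) % N = N - i - 1 := by
      have : n - (n - N + i) - 1 = N - i - 1 := by omega
      rw [this]; exact Nat.mod_eq_of_lt (by omega)
    rw [hmod]
    have hi1 : N - i - 1 + 1 = 1 + (N - 1 - i) := by omega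
    have hi2 : n - N + i = n - (1 + (N - 1 - i)) := by omega
    rw [hi1, ← hi2]
  omega

private lemma hrecR_lemma (hN : 2 ≤ N)
    (hek : ∀ t, 1 ≤ t → t < N → e t = e 1)
    (hrecN : ∀ n, N + 1 ≤ n → H n = H (n - N) + ∑ j ∈ Finset.Icc 1 N, e j * H (n - j)) :
    ∀ n, 1 ≤ n → (H (n + N) : ℝ)
      = (1 + (e N : ℝ)) * (H n : ℝ) + (e 1 : ℝ) * ∑ j ∈ Finset.range (N-1), (H (n+1+j) : ℝ) := by
  intro n hn
  have h := hrecN (n + N) (by omega)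
  have hnn : n + N - N = n := by omega
  rw [hnn] at h
  rw [← Finset.Ico_add_one_right_eq_Icc, Finset.sum_Ico_succ_top (by omega : 1 ≤ N)] at h
  rw [hnn] at h
  have hIco : ∑ j ∈ Finset.Ico 1 N, e j * H (n + N - j)
      = e 1 * ∑ j ∈ Finset.range (N-1), H (n+1+j) := by
    rw [Finset.sum_Ico_eq_sum_range, Finset.mul_sum]
    rw [← Finset.sum_range_reflect (fun j => e 1 * H (n+1+j)) (N-1)]
    refine Finset.sum_congr rfl fun i hi => ?_
    simp only [Finset.mem_range] at hi
    rw [hek (1 + i) (by omega) (by omega)]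
    have hix : n + N - (1 + i) = n + 1 + (N - 1 - 1 - i) := by omega
    rw [hix]
  rw [hIco] at h
  rw [h]
  push_cast
  ring

end steps3

section gsec
variable (N : ℕ) (c a φ : ℝ) (g : ℕ → ℝ)

private lemma gkeys (hN : 2 ≤ N) (hφpos : 0 < φ) (hc : 0 ≤ c) (ha : 0 < a)
    (hroot : φ ^ N = c * ∑ i ∈ Finset.range (N-1), φ ^ (i+1) + a)
    (hg : ∀ j, g j = φ ^ (N-1-j) - c * ∑ m ∈ Finset.range (N-1-j), φ ^ m) :
    (∀ x : ℝ, (x - φ) * ∑ j ∈ Finset.range N, g j * x ^ j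
        = x ^ N - c * ∑ i ∈ Finset.range (N-1), x ^ (i+1) - a) ∧
    (0 < ∑ j ∈ Finset.range N, g j * φ ^ j) ∧
    (φ * g 0 = a) ∧ (∀ j, j + 1 ≤ N - 1 → φ * g (j+1) = g j + c) ∧ g (N-1) = 1 := by
  have hφne : φ ≠ 0 := ne_of_gt hφpos
  have k0 : φ * g 0 = a := by
    rw [hg 0]
    simp only [Nat.sub_zero]
    rw [mul_sub, ← mul_assoc, mul_comm φ c, mul_assoc, Finset.mul_sum]
    have h1 : φ * φ ^ (N-1) = φ ^ N := by
      rw [← pow_succ']; congr 1; omega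
    have h2 : ∑ m ∈ Finset.range (N-1), φ * φ ^ m = ∑ m ∈ Finset.range (N-1), φ ^ (m+1) := by
      refine Finset.sum_congr rfl fun m _ => by rw [← pow_succ']
    rw [h1, h2]
    linarith [hroot]
  have k1 : ∀ j, j + 1 ≤ N - 1 → φ * g (j+1) = g j + c := by
    intro j hj
    rw [hg (j+1), hg j]
    have e1 : N - 1 - (j+1) + 1 = N - 1 - j := by omega
    have h1 : φ * φ ^ (N-1-(j+1)) = φ ^ (N-1-j) := by
      rw [← pow_succ', e1]
    have h2 : φ * ∑ m ∈ Finset.range (N-1-(j+1)), φ ^ m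
        = ∑ m ∈ Finset.range (N-1-j), φ ^ m - 1 := by
      rw [Finset.mul_sum]
      have : ∑ m ∈ Finset.range (N-1-j), φ ^ m
          = ∑ m ∈ Finset.range (N-1-(j+1)), φ ^ (m+1) + φ ^ 0 := by
        rw [← e1, Finset.sum_range_succ']
      rw [this]
      simp only [pow_zero]
      rw [add_sub_cancel_right]
      refine Finset.sum_congr rfl fun m _ => by rw [← pow_succ']
    rw [mul_sub, h1, ← mul_assoc, mul_comm φ c, mul_assoc, h2]
    ring
  have ktop : g (N-1) = 1 := by
    rw [hg (N-1)]
    simp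
  have kpoly : ∀ x : ℝ, (x - φ) * ∑ j ∈ Finset.range N, g j * x ^ j
      = x ^ N - c * ∑ i ∈ Finset.range (N-1), x ^ (i+1) - a := by
    intro x
    obtain ⟨M, hM⟩ : ∃ M, N = M + 1 := ⟨N - 1, by omega⟩
    have hM1 : N - 1 = M := by omega
    rw [sub_mul, Finset.mul_sum, Finset.mul_sum]
    have hx1 : ∑ j ∈ Finset.range N, x * (g j * x ^ j)
        = ∑ j ∈ Finset.range M, g j * x ^ (j+1) + g M * x ^ (M+1) := by
      rw [hM, Finset.sum_range_succ]
      congr 1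
      · refine Finset.sum_congr rfl fun j _ => by ring
      · ring
    have hx2 : ∑ j ∈ Finset.range N, φ * (g j * x ^ j)
        = ∑ j ∈ Finset.range M, (g j + c) * x ^ (j+1) + a := by
      rw [hM, Finset.sum_range_succ']
      congr 1
      · refine Finset.sum_congr rfl fun j hj => ?_
        simp only [Finset.mem_range] at hj
        rw [← mul_assoc, k1 j (by omega)]
      · simpa using k0
    rw [hx1, hx2, show g M = 1 from hM1 ▸ ktop]
    have : ∑ j ∈ Finset.range M, (g j + c) * x ^ (j+1)
        = ∑ j ∈ Finset.range M, g j * x ^ (j+1) + c * ∑ j ∈ Finset.range M, x ^ (j+1) := by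
      rw [Finset.mul_sum, ← Finset.sum_add_distrib]
      refine Finset.sum_congr rfl fun j _ => by ring
    rw [this, hM1, hM]
    ring
  have kpos : 0 < ∑ j ∈ Finset.range N, g j * φ ^ j := by
    have hq : ∀ j, j ≤ N - 1 → 0 < g j * φ ^ j := by
      intro j
      induction j with
      | zero =>
        intro _
        have hg0 : g 0 = a / φ := by
          field_simp
          linarith [k0]
        rw [hg0]
        simp only [pow_zero, mul_one]
        positivity
      | succ j ih =>
        intro hj
        have hgj := ih (by omega)
        have hk := k1 j (by omega)
        have hφj : 0 < φ ^ j := pow_pos hφpos j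
        have : g (j+1) * φ ^ (j+1) = (g j + c) * φ ^ j := by
          rw [pow_succ]
          calc g (j+1) * (φ ^ j * φ) = (φ * g (j+1)) * φ ^ j := by ring
            _ = (g j + c) * φ ^ j := by rw [hk]
        rw [this]
        nlinarith
    refine Finset.sum_pos (fun j hj => hq j (by simp only [Finset.mem_range] at hj; omega)) ⟨0, by simp; omega⟩
  exact ⟨kpoly, kpos, k0, k1, ktop⟩

end gsec

section

variable (N : ℕ) (p w : ℕ → ℝ)

/-- upper window key inequality -/
private lemma window_key (hN : 2 ≤ N)
    (hp : ∀ j ∈ Finset.Icc 1 N, 0 < p j)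
    (hsum : ∑ j ∈ Finset.Icc 1 N, p j = 1)
    (hw : ∀ n, N + 1 ≤ n → w n = ∑ j ∈ Finset.Icc 1 N, p j * w (n - j)) (n : ℕ) :
    (Finset.Icc (n + N + 1) (n + N + N)).sup' (by simp; omega) w ≤
      (Finset.Icc (n + 1) (n + N)).sup' (by simp; omega) w -
        ((Finset.Icc 1 N).inf' (by simp; omega) p) ^ N *
          ((Finset.Icc (n + 1) (n + N)).sup' (by simp; omega) w -
            (Finset.Icc (n + 1) (n + N)).inf' (by simp; omega) w) := by
  have hne1 : (Finset.Icc 1 N).Nonempty := by simp; omega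
  have hnew : (Finset.Icc (n + 1) (n + N)).Nonempty := by simp; omega
  set δ : ℝ := (Finset.Icc 1 N).inf' hne1 p with hδ
  set M : ℝ := (Finset.Icc (n + 1) (n + N)).sup' hnew w with hM
  set m : ℝ := (Finset.Icc (n + 1) (n + N)).inf' hnew w with hm
  have hδpos : 0 < δ := by
    rw [hδ, Finset.lt_inf'_iff]; exact hp
  have hδle : ∀ j ∈ Finset.Icc 1 N, δ ≤ p j := fun j hj => Finset.inf'_le p hj
  have hδ1 : δ ≤ 1 := by
    have h1 : (1 : ℕ) ∈ Finset.Icc 1 N := by simp; omega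
    have := hδle 1 h1
    have hle : p 1 ≤ 1 := by
      rw [← hsum]
      exact Finset.single_le_sum (fun j hj => (hp j hj).le) h1
    linarith
  have hmM : m ≤ M := le_trans (Finset.inf'_le w (by simp; omega : n + 1 ∈ Finset.Icc (n+1) (n+N)))
    (Finset.le_sup' w (by simp; omega))
  -- all future values bounded by M
  have hub : ∀ t, n + 1 ≤ t → w t ≤ M := by
    intro t
    induction t using Nat.strong_induction_on with
    | _ t ih =>
      intro ht
      by_cases hc : t ≤ n + N
      · exact Finset.le_sup' w (by simp; omega)
      · rw [hw t (by omega)]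
        calc ∑ j ∈ Finset.Icc 1 N, p j * w (t - j)
            ≤ ∑ j ∈ Finset.Icc 1 N, p j * M := by
              refine Finset.sum_le_sum fun j hj => ?_
              simp only [Finset.mem_Icc] at hj
              exact mul_le_mul_of_nonneg_left
                (ih (t - j) (by omega) (by omega)) (hp j (by simp [hj])).le
          _ = M := by rw [← Finset.sum_mul, hsum, one_mul]
  have hlb : ∀ t, n + 1 ≤ t → m ≤ w t := by
    intro t
    induction t using Nat.strong_induction_on with
    | _ t ih =>
      intro ht
      by_cases hc : t ≤ n + N
      · exact Finset.inf'_le w (by simp; omega)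
      · rw [hw t (by omega)]
        calc m = ∑ j ∈ Finset.Icc 1 N, p j * m := by rw [← Finset.sum_mul, hsum, one_mul]
          _ ≤ ∑ j ∈ Finset.Icc 1 N, p j * w (t - j) := by
              refine Finset.sum_le_sum fun j hj => ?_
              simp only [Finset.mem_Icc] at hj
              exact mul_le_mul_of_nonneg_left
                (ih (t - j) (by omega) (by omega)) (hp j (by simp [hj])).le
  -- key decay claim
  have key : ∀ i, 1 ≤ i → i ≤ N → w (n + N + i) ≤ M - δ ^ i * (M - m) := by
    intro i h1
    induction i, h1 using Nat.le_induction with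
    | base =>
      intro _
      obtain ⟨t0, ht0mem, ht0⟩ := Finset.exists_mem_eq_inf' hnew w
      simp only [Finset.mem_Icc] at ht0mem
      set j0 : ℕ := n + N + 1 - t0 with hj0
      have hj0mem : j0 ∈ Finset.Icc 1 N := by simp [hj0]; omega
      have hidx : n + N + 1 - j0 = t0 := by omega
      rw [hw (n + N + 1) (by omega)]
      rw [← Finset.add_sum_erase _ _ hj0mem]
      have hrest : ∑ j ∈ (Finset.Icc 1 N).erase j0, p j * w (n + N + 1 - j)
          ≤ ∑ j ∈ (Finset.Icc 1 N).erase j0, p j * M := by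
        refine Finset.sum_le_sum fun j hj => ?_
        have hj' := Finset.mem_of_mem_erase hj
        simp only [Finset.mem_Icc] at hj'
        exact mul_le_mul_of_nonneg_left (hub _ (by omega)) (hp j (by simp [hj'])).le
      have hsplit : p j0 + ∑ j ∈ (Finset.Icc 1 N).erase j0, p j = 1 := by
        rw [Finset.add_sum_erase _ _ hj0mem, hsum]
      have hwj0 : w (n + N + 1 - j0) = m := by rw [hidx, hm, ht0]
      have hδj0 : δ ≤ p j0 := hδle j0 hj0mem
      have : p j0 * w (n + N + 1 - j0) + ∑ j ∈ (Finset.Icc 1 N).erase j0, p j * w (n + N + 1 - j)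
          ≤ p j0 * m + (1 - p j0) * M := by
        rw [hwj0]
        have : ∑ j ∈ (Finset.Icc 1 N).erase j0, p j * M = (1 - p j0) * M := by
          rw [← Finset.sum_mul]; congr 1; linarith
        linarith [hrest, this]
      have hfin : p j0 * m + (1 - p j0) * M ≤ M - δ ^ 1 * (M - m) := by
        have : δ * (M - m) ≤ p j0 * (M - m) :=
          mul_le_mul_of_nonneg_right hδj0 (by linarith)
        nlinarith
      linarith
    | succ i hi ih =>
      intro h2
      have h1mem : (1 : ℕ) ∈ Finset.Icc 1 N := by simp; omega
      have ihh := ih (by omega)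
      rw [hw (n + N + (i + 1)) (by omega)]
      rw [← Finset.add_sum_erase _ _ h1mem]
      have hidx : n + N + (i + 1) - 1 = n + N + i := by omega
      have hrest : ∑ j ∈ (Finset.Icc 1 N).erase 1, p j * w (n + N + (i + 1) - j)
          ≤ ∑ j ∈ (Finset.Icc 1 N).erase 1, p j * M := by
        refine Finset.sum_le_sum fun j hj => ?_
        have hj' := Finset.mem_of_mem_erase hj
        simp only [Finset.mem_Icc] at hj'
        exact mul_le_mul_of_nonneg_left (hub _ (by omega)) (hp j (by simp [hj'])).le
      have hsplit : p 1 + ∑ j ∈ (Finset.Icc 1 N).erase 1, p j = 1 := by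
        rw [Finset.add_sum_erase _ _ h1mem, hsum]
      have hp1 : δ ≤ p 1 := hδle 1 h1mem
      have hstep : p 1 * w (n + N + (i + 1) - 1) ≤ p 1 * (M - δ ^ i * (M - m)) := by
        rw [hidx]
        exact mul_le_mul_of_nonneg_left ihh (hp 1 h1mem).le
      have hδi : (0:ℝ) ≤ δ ^ i * (M - m) :=
        mul_nonneg (pow_nonneg hδpos.le i) (by linarith)
      have hfin : δ ^ (i+1) * (M - m) ≤ p 1 * (δ ^ i * (M - m)) := by
        rw [pow_succ, mul_comm (δ^i) δ, mul_assoc]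
        exact mul_le_mul_of_nonneg_right hp1 hδi
      have hrest' : ∑ j ∈ (Finset.Icc 1 N).erase 1, p j * M = (1 - p 1) * M := by
        rw [← Finset.sum_mul]; congr 1; linarith
      nlinarith [hrest, hstep]
  -- conclude
  refine Finset.sup'_le _ _ fun t ht => ?_
  simp only [Finset.mem_Icc] at ht
  have hi1 : 1 ≤ t - (n + N) := by omega
  have hi2 : t - (n + N) ≤ N := by omega
  have := key (t - (n + N)) hi1 hi2
  have heq : n + N + (t - (n + N)) = t := by omega
  rw [heq] at this
  have hpow : δ ^ N ≤ δ ^ (t - (n + N)) :=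
    pow_le_pow_of_le_one hδpos.le hδ1 hi2
  nlinarith [hpow, hmM, this, mul_le_mul_of_nonneg_right hpow (show (0:ℝ) ≤ M - m by linarith)]

end

private lemma window_conv (N : ℕ) (hN : 2 ≤ N) (p w : ℕ → ℝ)
    (hp : ∀ j ∈ Finset.Icc 1 N, 0 < p j)
    (hsum : ∑ j ∈ Finset.Icc 1 N, p j = 1)
    (hw : ∀ n, N + 1 ≤ n → w n = ∑ j ∈ Finset.Icc 1 N, p j * w (n - j)) :
    ∃ L, Filter.Tendsto w Filter.atTop (nhds L) := by
  have hne1 : (Finset.Icc 1 N).Nonempty := by simp; omega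
  have hnew : ∀ n : ℕ, (Finset.Icc (n+1) (n+N)).Nonempty := fun n => by simp; omega
  set M : ℕ → ℝ := fun n => (Finset.Icc (n+1) (n+N)).sup' (hnew n) w with hMdef
  set m : ℕ → ℝ := fun n => (Finset.Icc (n+1) (n+N)).inf' (hnew n) w with hmdef
  set δ : ℝ := (Finset.Icc 1 N).inf' hne1 p with hδ
  have hδpos : 0 < δ := by rw [hδ, Finset.lt_inf'_iff]; exact hp
  have hub : ∀ n t, n + 1 ≤ t → w t ≤ M n := by
    intro n t
    induction t using Nat.strong_induction_on with
    | _ t ih =>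
      intro ht
      by_cases hc : t ≤ n + N
      · exact Finset.le_sup' w (by simp [Finset.mem_Icc]; omega)
      · rw [hw t (by omega)]
        calc ∑ j ∈ Finset.Icc 1 N, p j * w (t - j)
            ≤ ∑ j ∈ Finset.Icc 1 N, p j * M n := by
              refine Finset.sum_le_sum fun j hj => ?_
              simp only [Finset.mem_Icc] at hj
              exact mul_le_mul_of_nonneg_left
                (ih (t - j) (by omega) (by omega)) (hp j (by simp [hj])).le
          _ = M n := by rw [← Finset.sum_mul, hsum, one_mul]
  have hlb : ∀ n t, n + 1 ≤ t → m n ≤ w t := by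
    intro n t
    induction t using Nat.strong_induction_on with
    | _ t ih =>
      intro ht
      by_cases hc : t ≤ n + N
      · exact Finset.inf'_le w (by simp [Finset.mem_Icc]; omega)
      · rw [hw t (by omega)]
        calc m n = ∑ j ∈ Finset.Icc 1 N, p j * m n := by rw [← Finset.sum_mul, hsum, one_mul]
          _ ≤ ∑ j ∈ Finset.Icc 1 N, p j * w (t - j) := by
              refine Finset.sum_le_sum fun j hj => ?_
              simp only [Finset.mem_Icc] at hj
              exact mul_le_mul_of_nonneg_left
                (ih (t - j) (by omega) (by omega)) (hp j (by simp [hj])).le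
  have hmM : ∀ n, m n ≤ M n := fun n =>
    le_trans (Finset.inf'_le w (by simp; omega : n + 1 ∈ Finset.Icc (n+1) (n+N)))
      (Finset.le_sup' w (by simp; omega))
  have hManti : Antitone M := antitone_nat_of_succ_le fun n =>
    Finset.sup'_le _ _ fun t ht => hub n t (by simp [Finset.mem_Icc] at ht; omega)
  have hmmono : Monotone m := monotone_nat_of_le_succ fun n =>
    Finset.le_inf' _ _ fun t ht => hlb n t (by simp [Finset.mem_Icc] at ht; omega)
  have hMbdd : BddBelow (Set.range M) := ⟨m 0, by
    rintro x ⟨n, rfl⟩; exact le_trans (hmmono (Nat.zero_le n)) (hmM n)⟩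
  have hmbdd : BddAbove (Set.range m) := ⟨M 0, by
    rintro x ⟨n, rfl⟩; exact le_trans (hmM n) (hManti (Nat.zero_le n))⟩
  have hMt : Filter.Tendsto M Filter.atTop (nhds (⨅ n, M n)) := tendsto_atTop_ciInf hManti hMbdd
  have hmt : Filter.Tendsto m Filter.atTop (nhds (⨆ n, m n)) := tendsto_atTop_ciSup hmmono hmbdd
  set LM := ⨅ n, M n
  set Lm := ⨆ n, m n
  have hkeyU : ∀ n, M (n + N) ≤ M n - δ ^ N * (M n - m n) := fun n =>
    window_key N p w hN hp hsum hw n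
  have h1 : Filter.Tendsto (fun n => M (n + N)) Filter.atTop (nhds LM) :=
    hMt.comp (Filter.tendsto_add_atTop_nat N)
  have h2 : Filter.Tendsto (fun n => M n - δ ^ N * (M n - m n)) Filter.atTop
      (nhds (LM - δ ^ N * (LM - Lm))) := hMt.sub (((hMt.sub hmt).const_mul _))
  have hle : LM ≤ LM - δ ^ N * (LM - Lm) := le_of_tendsto_of_tendsto' h1 h2 hkeyU
  have hLmLM : Lm ≤ LM := le_of_tendsto_of_tendsto' hmt hMt hmM
  have hδN : 0 < δ ^ N := pow_pos hδpos N
  have hEq : Lm = LM := by nlinarith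
  refine ⟨LM, ?_⟩
  have hlow : Filter.Tendsto (fun t => m (t - N)) Filter.atTop (nhds LM) := by
    rw [← hEq]; exact hmt.comp (Filter.tendsto_sub_atTop_nat N)
  have hup : Filter.Tendsto (fun t => M (t - N)) Filter.atTop (nhds LM) :=
    hMt.comp (Filter.tendsto_sub_atTop_nat N)
  refine tendsto_of_tendsto_of_tendsto_of_le_of_le' hlow hup ?_ ?_
  · filter_upwards [Filter.eventually_ge_atTop N] with t ht
    exact hlb (t - N) t (by omega)
  · filter_upwards [Filter.eventually_ge_atTop N] with t ht
    exact hub (t - N) t (by omega)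

/-- If the initial values of the fundamental sequence are powers of some real `B ≠ φ`,
then `H_n/φ^(n-1)` tends to `f(B)/((B-φ)·f'(φ))`. -/
theorem fundamental_sequence_binet_geometric (N : ℕ) (e : ℕ → ℕ) (hN : 2 ≤ N) (he : 1 ≤ e 1)
    (H : ℕ → ℕ) (hH1 : H 1 = 1)
    (hHrec : ∀ n, 2 ≤ n → H n = 1 + ∑ k ∈ Finset.Ico 1 n, maxBlock N e n k * H k)
    (f : ℝ → ℝ) (hf : f = fun x : ℝ =>
      x ^ N - (∑ k ∈ Finset.Ico 1 N, (e k : ℝ) * x ^ (N - k)) - (1 + (e N : ℝ)))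
    (φ : ℝ) (hφpos : 0 < φ) (hφroot : f φ = 0)
    (B : ℝ) (hB : B ≠ φ) (hHB : ∀ k, 1 ≤ k → k ≤ N → (H k : ℝ) = B ^ (k - 1)) :
    Filter.Tendsto (fun n : ℕ => (H n : ℝ) / φ ^ (n - 1)) Filter.atTop
      (nhds (f B / ((B - φ) * deriv f φ))) := by
  subst hf
  have hφne : φ ≠ 0 := ne_of_gt hφpos
  have eqnR := eqnR_lemma N e H B hN hHrec hHB
  obtain ⟨hcB, hek⟩ := hek_lemma N e B hN eqnR
  have hrecN := hrecN_lemma N e H hN hH1 hHrec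
  have hrecR := hrecR_lemma N e H hN hek hrecN
  have hsum_e : ∀ x : ℝ, ∑ k ∈ Finset.Ico 1 N, (e k : ℝ) * x ^ (N - k)
      = (e 1 : ℝ) * ∑ i ∈ Finset.range (N-1), x ^ (i+1) := by
    intro x
    rw [Finset.sum_Ico_eq_sum_range, Finset.mul_sum,
      ← Finset.sum_range_reflect (fun i => (e 1 : ℝ) * x ^ (i+1)) (N-1)]
    have hNN : N - 1 = N - 1 := rfl
    refine Finset.sum_congr rfl fun i hi => ?_
    simp only [Finset.mem_range] at hi
    have he1 : (e (1+i) : ℝ) = (e 1 : ℝ) := by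
      exact_mod_cast congrArg (Nat.cast : ℕ → ℝ) (hek (1+i) (by omega) (by omega))
    rw [he1]
    have hexp : N - (1+i) = (N - 1 - 1 - i) + 1 := by omega
    rw [hexp]
  have hroot : φ ^ N = (e 1 : ℝ) * ∑ i ∈ Finset.range (N-1), φ ^ (i+1) + (1 + (e N : ℝ)) := by
    have h0 := hφroot
    simp only at h0
    rw [hsum_e φ] at h0
    linarith
  have hcpos : (0:ℝ) < (e 1 : ℝ) := by exact_mod_cast Nat.lt_of_lt_of_le Nat.zero_lt_one he
  have hapos : (0:ℝ) < 1 + (e N : ℝ) := by positivity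
  -- weights
  set p : ℕ → ℝ := fun j =>
    if j = N then (1 + (e N : ℝ)) / φ ^ N else (e 1 : ℝ) / φ ^ j with hpdef
  have hp : ∀ j ∈ Finset.Icc 1 N, 0 < p j := by
    intro j hj
    rw [hpdef]
    dsimp only
    split
    · positivity
    · exact div_pos hcpos (pow_pos hφpos j)
  have hpsum : ∑ j ∈ Finset.Icc 1 N, p j = 1 := by
    rw [← Finset.Ico_add_one_right_eq_Icc, Finset.sum_Ico_succ_top (by omega : 1 ≤ N)]
    have h1 : ∑ j ∈ Finset.Ico 1 N, p j
        = ∑ j ∈ Finset.Ico 1 N, (e j : ℝ) * φ ^ (N - j) / φ ^ N := by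
      refine Finset.sum_congr rfl fun j hj => ?_
      simp only [Finset.mem_Ico] at hj
      rw [hpdef]
      dsimp only
      rw [if_neg (by omega)]
      have hej : (e j : ℝ) = (e 1 : ℝ) := by
        exact_mod_cast congrArg (Nat.cast : ℕ → ℝ) (hek j (by omega) (by omega))
      rw [hej, div_eq_div_iff (pow_pos hφpos j).ne' (pow_pos hφpos N).ne', mul_assoc]
      congr 1
      rw [← pow_add]
      congr 1
      omega
    rw [h1, hpdef]
    dsimp only
    rw [if_pos rfl, ← Finset.sum_div, ← add_div, div_eq_one_iff_eq (by positivity)]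
    rw [hsum_e φ, ← hroot]
  -- the recurrence for the normalized sequence
  have hw : ∀ n, N + 1 ≤ n → (H n : ℝ) / φ ^ (n-1)
      = ∑ j ∈ Finset.Icc 1 N, p j * ((H (n-j) : ℝ) / φ ^ (n-j-1)) := by
    intro n hn
    have hterm : ∀ j ∈ Finset.Icc 1 N, p j * ((H (n-j) : ℝ) / φ ^ (n-j-1))
        = ((if j = N then (1 + (e N : ℝ)) else (e 1 : ℝ)) * (H (n-j) : ℝ)) / φ ^ (n-1) := by
      intro j hj
      simp only [Finset.mem_Icc] at hj
      rw [hpdef]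
      dsimp only
      split
      · next hjN =>
        rw [div_mul_div_comm]
        congr 1
        rw [← pow_add]
        congr 1
        omega
      · rw [div_mul_div_comm]
        congr 1
        rw [← pow_add]
        congr 1
        omega
    rw [Finset.sum_congr rfl hterm, ← Finset.sum_div]
    congr 1
    have hsplit : ∀ j ∈ Finset.Icc 1 N,
        (if j = N then (1 + (e N : ℝ)) else (e 1 : ℝ)) * (H (n-j) : ℝ)
        = (e j : ℝ) * (H (n-j) : ℝ) + (if j = N then (H (n-N) : ℝ) else 0) := by
      intro j hj
      simp only [Finset.mem_Icc] at hj
      split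
      · next hjN => subst hjN; ring
      · next hjN =>
        have hej : (e j : ℝ) = (e 1 : ℝ) := by
          exact_mod_cast congrArg (Nat.cast : ℕ → ℝ) (hek j (by omega) (by omega))
        rw [hej]
        ring
    rw [Finset.sum_congr rfl hsplit, Finset.sum_add_distrib, Finset.sum_ite_eq' (Finset.Icc 1 N)]
    rw [if_pos (by simp [Finset.mem_Icc]; omega : N ∈ Finset.Icc 1 N)]
    have hcast := hrecN n hn
    have : (H n : ℝ) = (H (n-N) : ℝ) + ∑ j ∈ Finset.Icc 1 N, (e j : ℝ) * (H (n-j) : ℝ) := by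
      exact_mod_cast congrArg (Nat.cast : ℕ → ℝ) hcast
    rw [this]
    push_cast
    ring
  obtain ⟨L, hL⟩ := window_conv N hN p (fun n => (H n : ℝ) / φ ^ (n-1)) hp hpsum hw
  -- the auxiliary polynomial
  set G : ℕ → ℝ := fun j => φ ^ (N-1-j) - (e 1 : ℝ) * ∑ m ∈ Finset.range (N-1-j), φ ^ m
    with hGdef
  obtain ⟨kpoly, kpos, k0, k1, ktop⟩ :=
    gkeys N (e 1 : ℝ) (1 + (e N : ℝ)) φ G hN hφpos hcpos.le hapos hroot
      (fun j => by rw [hGdef])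
  have hfpoly : ∀ x : ℝ, (x - φ) * ∑ j ∈ Finset.range N, G j * x ^ j
      = x ^ N - (∑ k ∈ Finset.Ico 1 N, (e k : ℝ) * x ^ (N - k)) - (1 + (e N : ℝ)) := by
    intro x
    rw [kpoly x, hsum_e x]
  -- derivative
  have hGd : HasDerivAt (fun y : ℝ => ∑ j ∈ Finset.range N, G j * y ^ j)
      (∑ j ∈ Finset.range N, G j * (j * φ ^ (j-1))) φ :=
    HasDerivAt.fun_sum fun j _ => (hasDerivAt_pow j φ).const_mul (G j)
  have hfd : HasDerivAt (fun x : ℝ =>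
      x ^ N - (∑ k ∈ Finset.Ico 1 N, (e k : ℝ) * x ^ (N - k)) - (1 + (e N : ℝ)))
      (∑ j ∈ Finset.range N, G j * φ ^ j) φ := by
    have heq : (fun x : ℝ =>
        x ^ N - (∑ k ∈ Finset.Ico 1 N, (e k : ℝ) * x ^ (N - k)) - (1 + (e N : ℝ)))
        = fun x => (x - φ) * ∑ j ∈ Finset.range N, G j * x ^ j :=
      funext fun x => (hfpoly x).symm
    rw [heq]
    have h1 : HasDerivAt (fun x : ℝ => x - φ) 1 φ := (hasDerivAt_id φ).sub_const φ
    have h2 := h1.fun_mul hGd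
    simpa using h2
  have hderiv : deriv (fun x : ℝ =>
      x ^ N - (∑ k ∈ Finset.Ico 1 N, (e k : ℝ) * x ^ (N - k)) - (1 + (e N : ℝ))) φ
      = ∑ j ∈ Finset.range N, G j * φ ^ j := hfd.deriv
  -- the geometric linear functional
  set V : ℕ → ℝ := fun n => ∑ j ∈ Finset.range N, G j * (H (n+j) : ℝ) with hVdef
  have hVstep : ∀ n, 1 ≤ n → V (n+1) = φ * V n := by
    intro n hn
    obtain ⟨M, hM⟩ : ∃ M, N = M + 1 := ⟨N - 1, by omega⟩
    have hM1 : N - 1 = M := by omega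
    have hφV : φ * V n = ∑ j ∈ Finset.range M, G j * (H (n+1+j) : ℝ)
        + ((e 1 : ℝ) * ∑ j ∈ Finset.range M, (H (n+1+j) : ℝ)
            + (1 + (e N : ℝ)) * (H n : ℝ)) := by
      rw [hVdef]
      dsimp only
      rw [Finset.mul_sum, hM, Finset.sum_range_succ']
      have hterm : ∀ j ∈ Finset.range M, φ * (G (j+1) * (H (n+(j+1)) : ℝ))
          = (G j + (e 1 : ℝ)) * (H (n+1+j) : ℝ) := by
        intro j hj
        simp only [Finset.mem_range] at hj
        rw [← mul_assoc, k1 j (by omega)]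
        have hix : n + (j+1) = n + 1 + j := by omega
        rw [hix]
      rw [Finset.sum_congr rfl hterm]
      have hlast : φ * (G 0 * (H (n+0) : ℝ)) = (1 + (e N : ℝ)) * (H n : ℝ) := by
        rw [← mul_assoc, k0]
        norm_num
      rw [hlast]
      have hsplit2 : ∑ j ∈ Finset.range M, (G j + (e 1 : ℝ)) * (H (n+1+j) : ℝ)
          = ∑ j ∈ Finset.range M, G j * (H (n+1+j) : ℝ)
            + (e 1 : ℝ) * ∑ j ∈ Finset.range M, (H (n+1+j) : ℝ) := by
        rw [Finset.mul_sum, ← Finset.sum_add_distrib]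
        exact Finset.sum_congr rfl fun j _ => by ring
      rw [hsplit2, ← hM]
      ring
    have hVn1 : V (n+1) = ∑ j ∈ Finset.range M, G j * (H (n+1+j) : ℝ) + (H (n+N) : ℝ) := by
      rw [hVdef]
      dsimp only
      rw [hM, Finset.sum_range_succ, show G M = 1 from hM1 ▸ ktop, one_mul]
      simp only [show n + 1 + M = n + N from by omega, show n + (M+1) = n + N from by omega]
    have hR := hrecR n hn
    rw [hM1] at hR
    rw [hVn1, hR, hφV]
    ring
  have hVgeom : ∀ n, 1 ≤ n → V n = V 1 * φ ^ (n-1) := by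
    intro n hn
    induction n, hn using Nat.le_induction with
    | base => simp
    | succ n hn ih =>
      rw [hVstep n hn, ih]
      have hix : n + 1 - 1 = (n - 1) + 1 := by omega
      rw [hix, pow_succ]
      ring
  -- identify the limit
  set S : ℝ := ∑ j ∈ Finset.range N, G j * φ ^ j with hSdef
  have hseqc : ∀ n : ℕ, ∑ j ∈ Finset.range N,
      (G j * φ ^ j) * ((H (n+1+j) : ℝ) / φ ^ (n+1+j-1)) = V 1 := by
    intro n
    have h1 : ∀ j ∈ Finset.range N, (G j * φ ^ j) * ((H (n+1+j) : ℝ) / φ ^ (n+1+j-1))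
        = G j * (H (n+1+j) : ℝ) / φ ^ n := by
      intro j hj
      have hix : n + 1 + j - 1 = n + j := by omega
      rw [hix, pow_add]
      field_simp
    rw [Finset.sum_congr rfl h1, ← Finset.sum_div]
    have h2 : ∑ j ∈ Finset.range N, G j * (H (n+1+j) : ℝ) = V (n+1) := by
      rw [hVdef]
    rw [h2, hVgeom (n+1) (by omega)]
    have hix : n + 1 - 1 = n := by omega
    rw [hix]
    field_simp
  have hlim2 : Filter.Tendsto (fun n : ℕ => ∑ j ∈ Finset.range N,
      (G j * φ ^ j) * ((H (n+1+j) : ℝ) / φ ^ (n+1+j-1))) Filter.atTop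
      (nhds (∑ j ∈ Finset.range N, (G j * φ ^ j) * L)) := by
    refine tendsto_finset_sum _ fun j _ => ?_
    have hcomp := hL.comp (Filter.tendsto_add_atTop_nat (1+j))
    have hfun : ((fun n : ℕ => (H n : ℝ) / φ ^ (n-1)) ∘ fun n => n + (1+j))
        = fun n : ℕ => (H (n+1+j) : ℝ) / φ ^ (n+1+j-1) := by
      funext n
      simp only [Function.comp]
      rw [show n + (1+j) = n + 1 + j from by omega]
    rw [hfun] at hcomp
    exact hcomp.const_mul _
  have hconstlim : Filter.Tendsto (fun n : ℕ => ∑ j ∈ Finset.range N,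
      (G j * φ ^ j) * ((H (n+1+j) : ℝ) / φ ^ (n+1+j-1))) Filter.atTop (nhds (V 1)) := by
    rw [show (fun n : ℕ => ∑ j ∈ Finset.range N,
      (G j * φ ^ j) * ((H (n+1+j) : ℝ) / φ ^ (n+1+j-1))) = fun _ => V 1 from funext hseqc]
    exact tendsto_const_nhds
  have hSL : S * L = V 1 := by
    have := tendsto_nhds_unique hlim2 hconstlim
    rw [← this, hSdef, Finset.sum_mul]
  have hV1 : V 1 = ∑ j ∈ Finset.range N, G j * B ^ j := by
    rw [hVdef]
    dsimp only
    refine Finset.sum_congr rfl fun j hj => ?_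
    simp only [Finset.mem_range] at hj
    rw [hHB (1+j) (by omega) (by omega)]
    congr 2
    omega
  have hBφ : B - φ ≠ 0 := sub_ne_zero.mpr hB
  have hSne : S ≠ 0 := ne_of_gt kpos
  have hLval : (fun x : ℝ =>
      x ^ N - (∑ k ∈ Finset.Ico 1 N, (e k : ℝ) * x ^ (N - k)) - (1 + (e N : ℝ))) B
      / ((B - φ) * deriv (fun x : ℝ =>
      x ^ N - (∑ k ∈ Finset.Ico 1 N, (e k : ℝ) * x ^ (N - k)) - (1 + (e N : ℝ))) φ) = L := by
    rw [hderiv]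
    have hnum : (fun x : ℝ =>
        x ^ N - (∑ k ∈ Finset.Ico 1 N, (e k : ℝ) * x ^ (N - k)) - (1 + (e N : ℝ))) B
        = (B - φ) * ∑ j ∈ Finset.range N, G j * B ^ j := (hfpoly B).symm
    rw [hnum, mul_div_mul_left _ _ hBφ, ← hV1, ← hSL,
      mul_div_cancel_left₀ _ hSne]
  rw [hLval]
  exact hL
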